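/- Let c ∈ H^*(C) be homogeneous. Then: (i) the sequence 0 → H^*(C)/(c·H^*(C)) → H^*(cone(l_{s(c)})) → Ann_{H^*(C)}(c) → 0, whose first map is induced by the inclusion C → cone(l_{s(c)}) and whose second map is induced by the projection cone(l_{s(c)}) → C[|c|−1], is a short exact sequence of right H^*(C)-modules; (ii) the map β : Ann_{H^*(C)}(c) × H^*(C) → H^*(C)/(c·H^*(C)) sending (x, y) to the class of θ(c,x,y) modulo c·H^*(C) is well defined on homogeneous elements and satisfies β(x, yz) = β(xy, z) + β(x, y)z; and (iii) there is an isomorphism of right H^*(C)-modules from E_β (the module H^*(C)/(c·H^*(C)) × Ann_{H^*(C)}(c) with action (m, n)·x = (mx + β(n,x), nx)) to H^*(cone(l_{s(c)})), given by (m, n) ↦ (image of m) + σ(n) with σ(n) = [(−q(c,n), s(n))], which carries the extension 0 → H^*(C)/(c·H^*(C)) → E_β → Ann_{H^*(C)}(c) → 0 to the extension in (i). In other words, the class of the cone extension is the image of the Hochschild class [θ] under the canonical map to the extension group. -/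

import Mathlib

/-- `Qmap s q x y` is the cochain `q(x,y) := q(s(x)s(y) - s(xy))`. -/
def Qmap {k C H : Type} [CommRing k] [Ring C] [Algebra k C] [Ring H] [Algebra k H]
    (s : H →ₗ[k] C) (q : C → C) (x y : H) : C :=
  q (s x * s y - s (x * y))

/-- `Theta s q i x y z` is the expression
`Θ(x,y,z) = (-1)^{|x|} s(x) q(y,z) - q(xy,z) + q(x,yz) - q(x,y) s(z)`,
where `i = |x|` is the degree of `x`. -/
def Theta {k C H : Type} [CommRing k] [Ring C] [Algebra k C] [Ring H] [Algebra k H]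
    (s : H →ₗ[k] C) (q : C → C) (i : ℕ) (x y z : H) : C :=
  ((-1 : ℤ) ^ i) • (s x * Qmap s q y z) - Qmap s q (x * y) z
    + Qmap s q x (y * z) - Qmap s q x y * s z

/-- The differential of the mapping cone `cone(l_{s(c)})`, where `m = |c|`:
`D(u,v) = (d u + s(c) v, (-1)^{|c|-1} d v)` (note `(-1)^(m+1) = (-1)^(m-1)`). -/
def Dcone {k C H : Type} [CommRing k] [Ring C] [Algebra k C] [Ring H] [Algebra k H]
    (d : C →ₗ[k] C) (s : H →ₗ[k] C) (c : H) (m : ℕ) (p : C × C) : C × C :=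
  (d p.1 + s c * p.2, ((-1 : ℤ) ^ (m + 1)) • d p.2)

set_option maxHeartbeats 4000000 in
/-- **The class of the cone extension is the image of the Hochschild class `[θ]`.**
For homogeneous `c ∈ H^*(C)`:
(i) `0 → H^*(C)/(c·H^*(C)) → H^*(cone(l_{s(c)})) → Ann(c) → 0` is a short exact
sequence of right `H^*(C)`-modules, where the first map is `u ↦ [(s(u), 0)]` (induced
by the inclusion `C → cone(l_{s(c)})`) and the second is induced by the projection;
(ii) `β(x,y) := θ(c,x,y) mod c·H^*(C)` satisfies `β(x,yz) = β(xy,z) + β(x,y)z`;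
(iii) `(u, x) ↦ [s(u),0] + σ(x)`, with `σ(x) = [(-q(c,x), s(x))]`, is an isomorphism
of right `H^*(C)`-modules from `E_β` to `H^*(cone(l_{s(c)}))` compatible with the two
extensions. -/
theorem cone_extension_class (k : Type) [CommRing k]
    (C : Type) [Ring C] [Algebra k C]
    (𝒜 : ℕ → Submodule k C) [GradedAlgebra 𝒜]
    (d : C →ₗ[k] C)
    (hd2 : ∀ x : C, d (d x) = 0)
    (hddeg : ∀ (i : ℕ), ∀ x ∈ 𝒜 i, d x ∈ 𝒜 (i + 1))
    (hleib : ∀ (i : ℕ), ∀ x ∈ 𝒜 i, ∀ y : C,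
      d (x * y) = d x * y + ((-1 : ℤ) ^ i) • (x * d y))
    (H : Type) [Ring H] [Algebra k H]
    (ℋ : ℕ → Submodule k H) [GradedAlgebra ℋ]
    (π : C → H)
    (hπadd : ∀ x y : C, d x = 0 → d y = 0 → π (x + y) = π x + π y)
    (hπsmul : ∀ (a : k) (x : C), d x = 0 → π (a • x) = a • π x)
    (hπmul : ∀ x y : C, d x = 0 → d y = 0 → π (x * y) = π x * π y)
    (hπone : π 1 = 1)
    (hπdeg : ∀ (i : ℕ), ∀ x ∈ 𝒜 i, d x = 0 → π x ∈ ℋ i)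
    (hπker : ∀ x : C, d x = 0 → (π x = 0 ↔ ∃ y : C, d y = x))
    (hπsurj : ∀ h : H, ∃ x : C, d x = 0 ∧ π x = h)
    (s : H →ₗ[k] C)
    (hs0 : ∀ h : H, d (s h) = 0)
    (hsπ : ∀ h : H, π (s h) = h)
    (hsdeg : ∀ (i : ℕ), ∀ h ∈ ℋ i, s h ∈ 𝒜 i)
    (q : C → C)
    (hqd : ∀ x : C, (∃ y, d y = x) → d (q x) = x)
    (hqadd : ∀ x y : C, (∃ u, d u = x) → (∃ v, d v = y) → q (x + y) = q x + q y)
    (hqsmul : ∀ (a : k) (x : C), (∃ y, d y = x) → q (a • x) = a • q x)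
    (hqdeg : ∀ (i : ℕ), ∀ x : C, (∃ y, d y = x) → x ∈ 𝒜 (i + 1) → q x ∈ 𝒜 i)
    (m : ℕ) (c : H) (hc : c ∈ ℋ m)
    (Hc : Type) [AddCommGroup Hc] [Module k Hc]
    (πc : C × C → Hc)
    (hπcadd : ∀ p r : C × C, Dcone d s c m p = 0 → Dcone d s c m r = 0 →
      πc (p + r) = πc p + πc r)
    (hπcsmul : ∀ (a : k) (p : C × C), Dcone d s c m p = 0 → πc (a • p) = a • πc p)
    (hπcker : ∀ p : C × C, Dcone d s c m p = 0 → (πc p = 0 ↔ ∃ r, Dcone d s c m r = p))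
    (hπcsurj : ∀ w : Hc, ∃ p : C × C, Dcone d s c m p = 0 ∧ πc p = w)
    (ρ : Hc → H → Hc)
    (hρ : ∀ (p : C × C) (y : H), Dcone d s c m p = 0 →
      ρ (πc p) y = πc (p.1 * s y, p.2 * s y))
    (ψ : Hc → H)
    (hψ : ∀ p : C × C, Dcone d s c m p = 0 → ψ (πc p) = π p.2) :
    -- (i) the cone extension is a short exact sequence of right `H^*(C)`-modules
    ((∀ u y : H, ρ (πc (s u, 0)) y = πc (s (u * y), 0)) ∧
     (∀ u : H, πc (s u, 0) = 0 ↔ ∃ v : H, u = c * v) ∧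
     (∀ w : Hc, ψ w = 0 ↔ ∃ u : H, w = πc (s u, 0)) ∧
     (∀ x : H, (∃ w : Hc, ψ w = x) ↔ c * x = 0) ∧
     (∀ (w : Hc) (y : H), ψ (ρ w y) = ψ w * y)) ∧
    -- (ii) `β(x,y) = θ(c,x,y) mod cH` satisfies `β(x,yz) = β(xy,z) + β(x,y)z`
    (∀ (i j l : ℕ) (x y z : H), x ∈ ℋ i → y ∈ ℋ j → z ∈ ℋ l → c * x = 0 →
      ∃ u : H, π (Theta s q m c x (y * z)) - π (Theta s q m c (x * y) z)
          - π (Theta s q m c x y) * z = c * u) ∧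
    -- (iii) `(u,x) ↦ [s(u),0] + σ(x)` is an isomorphism of right `H^*(C)`-modules
    -- from `E_β` onto `H^*(cone(l_{s(c)}))`, compatible with the two extensions
    ((∀ w : Hc, ∃ u x : H, c * x = 0 ∧
        w = πc (s u, 0) + πc (-(Qmap s q c x), s x)) ∧
     (∀ u u' x x' : H, c * x = 0 → c * x' = 0 →
        πc (s u, 0) + πc (-(Qmap s q c x), s x)
          = πc (s u', 0) + πc (-(Qmap s q c x'), s x') →
        x = x' ∧ ∃ v : H, u - u' = c * v) ∧
     (∀ u x y : H, c * x = 0 →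
        πc (s (u * y + π (Theta s q m c x y)), 0)
            + πc (-(Qmap s q c (x * y)), s (x * y))
          = ρ (πc (s u, 0) + πc (-(Qmap s q c x), s x)) y) ∧
     (∀ u : H, πc (s u, 0) + πc (-(Qmap s q c 0), s 0) = πc (s u, 0)) ∧
     (∀ u x : H, c * x = 0 →
        ψ (πc (s u, 0) + πc (-(Qmap s q c x), s x)) = x)) := by
  classical
  -- ### basic helper lemmas ###
  have hπzero : π 0 = 0 := by
    have h := hπsmul 0 0 (by simp)
    simpa using h
  have hπneg : ∀ x : C, d x = 0 → π (-x) = - π x := by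
    intro x hx
    have hdx : d (-x) = 0 := by rw [map_neg, hx, neg_zero]
    have h := hπadd x (-x) hx hdx
    rw [add_neg_cancel, hπzero] at h
    exact (neg_eq_of_add_eq_zero_right h.symm).symm
  have hπsub : ∀ x y : C, d x = 0 → d y = 0 → π (x - y) = π x - π y := by
    intro x y hx hy
    have hdy : d (-y) = 0 := by rw [map_neg, hy, neg_zero]
    rw [sub_eq_add_neg, hπadd x (-y) hx hdy, hπneg y hy, sub_eq_add_neg]
  have dmul_right : ∀ a b : C, d b = 0 → d (a * b) = d a * b := by
    intro a b hb
    refine DirectSum.Decomposition.inductionOn 𝒜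
      (motive := fun a => d (a * b) = d a * b) (by simp) ?_ ?_ a
    · rintro i ⟨x, hx⟩
      simp only
      rw [hleib i x hx b, hb, mul_zero, smul_zero, add_zero]
    · intro u v hu hv
      rw [add_mul, map_add, map_add, add_mul, hu, hv]
  have him0 : ∀ z : C, z ∈ 𝒜 0 → (∃ w : C, d w = z) → z = 0 := by
    rintro z hz ⟨w, hw⟩
    have key : ∀ w : C, (DirectSum.decompose 𝒜 (d w) 0 : C) = 0 := by
      intro w
      refine DirectSum.Decomposition.inductionOn 𝒜
        (motive := fun w => (DirectSum.decompose 𝒜 (d w) 0 : C) = 0) (by simp) ?_ ?_ w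
      · rintro i ⟨x, hx⟩
        simp only
        rw [DirectSum.decompose_of_mem_ne 𝒜 (hddeg i x hx) (by omega)]
      · intro u v hu hv
        rw [map_add, DirectSum.decompose_add]
        simpa using by rw [hu, hv, add_zero]
    calc z = (DirectSum.decompose 𝒜 z 0 : C) :=
            (DirectSum.decompose_of_mem_same 𝒜 hz).symm
      _ = (DirectSum.decompose 𝒜 (d w) 0 : C) := by rw [hw]
      _ = 0 := key w
  have hdss : ∀ x y : H, d (s x * s y) = 0 := by
    intro x y
    rw [dmul_right _ _ (hs0 y), hs0 x, zero_mul]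
  have hQex : ∀ x y : H, ∃ w : C, d w = s x * s y - s (x * y) := by
    intro x y
    have hz : d (s x * s y - s (x * y)) = 0 := by
      rw [map_sub, hdss, hs0, sub_zero]
    have hp : π (s x * s y - s (x * y)) = 0 := by
      rw [hπsub _ _ (hdss x y) (hs0 _), hπmul _ _ (hs0 x) (hs0 y), hsπ, hsπ, hsπ,
        sub_self]
    exact (hπker _ hz).1 hp
  have hdQ : ∀ x y : H, d (Qmap s q x y) = s x * s y - s (x * y) :=
    fun x y => hqd _ (hQex x y)
  have hq0 : q 0 = 0 := by
    have h := hqsmul 0 0 ⟨0, by simp⟩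
    simpa using h
  have hQ0l : ∀ y : H, Qmap s q 0 y = 0 := by
    intro y
    simp [Qmap, hq0]
  have hQ0r : ∀ x : H, Qmap s q x 0 = 0 := by
    intro x
    simp [Qmap, hq0]
  have hsc : s c ∈ 𝒜 m := hsdeg m c hc
  have hscd : ∀ w : C, d (s c * w) = ((-1 : ℤ) ^ m) • (s c * d w) := by
    intro w
    rw [hleib m (s c) hsc w, hs0, zero_mul, zero_add]
  have hsplit : ∀ x : C, d x = 0 → ∃ w : C, x = s (π x) + d w := by
    intro x hx
    have h2 : d (x - s (π x)) = 0 := by rw [map_sub, hx, hs0, sub_zero]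
    have h3 : π (x - s (π x)) = 0 := by rw [hπsub _ _ hx (hs0 _), hsπ, sub_self]
    obtain ⟨w, hw⟩ := (hπker _ h2).1 h3
    exact ⟨w, by rw [hw]; abel⟩
  -- sign helpers
  have hsq : ∀ (j : ℕ) (x : C), ((-1 : ℤ) ^ j) • ((-1 : ℤ) ^ j) • x = x := by
    intro j x
    rw [smul_smul, ← pow_add, Even.neg_one_pow ⟨j, by ring⟩, one_smul]
  have hπz : ∀ (j : ℕ) (x : C), d x = 0 →
      π (((-1 : ℤ) ^ j) • x) = ((-1 : ℤ) ^ j) • π x := by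
    intro j x hx
    rcases Nat.even_or_odd j with hj | hj
    · rw [hj.neg_one_pow, one_smul, one_smul]
    · rw [hj.neg_one_pow, neg_smul, one_smul, neg_smul, one_smul, hπneg x hx]
  -- ### Dcone helpers ###
  have hDadd : ∀ p r : C × C,
      Dcone d s c m (p + r) = Dcone d s c m p + Dcone d s c m r := by
    intro p r
    simp only [Dcone, Prod.fst_add, Prod.snd_add, map_add, mul_add, smul_add,
      Prod.mk_add_mk, Prod.mk.injEq]
    exact ⟨by abel, trivial⟩
  have hD0 : ∀ p : C × C, Dcone d s c m p = 0 →
      d p.1 + s c * p.2 = 0 ∧ d p.2 = 0 := by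
    intro p hp
    rw [Dcone, Prod.ext_iff] at hp
    obtain ⟨h1, h2⟩ := hp
    refine ⟨h1, ?_⟩
    have := congrArg (fun x => ((-1 : ℤ) ^ (m + 1)) • x) h2
    simpa [hsq (m + 1)] using this
  have hDD : ∀ p : C × C, Dcone d s c m (Dcone d s c m p) = 0 := by
    intro p
    simp only [Dcone, Prod.ext_iff]
    constructor
    · rw [map_add, hd2, zero_add, hscd, mul_smul_comm,
        show ((-1 : ℤ)) ^ (m + 1) = -((-1 : ℤ)) ^ m by rw [pow_succ]; ring,
        neg_smul, add_neg_cancel, Prod.fst_zero]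
    · rw [map_zsmul, hd2, smul_zero, smul_zero, Prod.snd_zero]
  have hDzero : Dcone d s c m 0 = 0 := by
    simp [Dcone]
  have hπczero : πc 0 = 0 := by
    have h := hπcsmul 0 0 hDzero
    simpa using h
  have hπcD : ∀ p : C × C, πc (Dcone d s c m p) = 0 :=
    fun p => (hπcker _ (hDD p)).2 ⟨p, rfl⟩
  have hπcneg : ∀ p : C × C, Dcone d s c m p = 0 → πc (-p) = - πc p := by
    intro p hp
    have h := hπcsmul (-1 : k) p hp
    simpa using h
  have hmod : ∀ p r : C × C, Dcone d s c m r = 0 →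
      (∃ w : C × C, p = r + Dcone d s c m w) → πc p = πc r := by
    rintro p r hr ⟨w, rfl⟩
    rw [hπcadd r _ hr (hDD w), hπcD, add_zero]
  have hDsu : ∀ u : H, Dcone d s c m (s u, 0) = 0 := by
    intro u
    simp [Dcone, hs0]
  have hP : ∀ x : H, c * x = 0 →
      Dcone d s c m (-(Qmap s q c x), s x) = 0 := by
    intro x hx
    simp only [Dcone, map_neg, hdQ, hs0, smul_zero, hx, map_zero, Prod.ext_iff]
    constructor
    · simp
    · rfl
  have hDsum : ∀ (u x : H), c * x = 0 →
      Dcone d s c m (s u - Qmap s q c x, s x) = 0 := by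
    intro u x hx
    have h : (s u - Qmap s q c x, s x) = ((s u, 0) : C × C) + (-(Qmap s q c x), s x) := by
      rw [Prod.mk_add_mk, zero_add, sub_eq_add_neg]
    rw [h, hDadd, hDsu, hP x hx, add_zero]
  have hπcP : ∀ (u x : H), c * x = 0 →
      πc (s u, 0) + πc (-(Qmap s q c x), s x) = πc (s u - Qmap s q c x, s x) := by
    intro u x hx
    rw [← hπcadd _ _ (hDsu u) (hP x hx)]
    congr 1
    rw [Prod.mk_add_mk, zero_add, sub_eq_add_neg]
  have hDmul : ∀ (p : C × C) (y : H), Dcone d s c m p = 0 →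
      Dcone d s c m (p.1 * s y, p.2 * s y) = 0 := by
    intro p y hp
    obtain ⟨h1, h2⟩ := hD0 p hp
    simp only [Dcone, Prod.ext_iff]
    constructor
    · rw [dmul_right _ _ (hs0 y), ← mul_assoc, ← add_mul, h1, zero_mul, Prod.fst_zero]
    · rw [dmul_right _ _ (hs0 y), h2, zero_mul, smul_zero, Prod.snd_zero]
  -- ### part (i) ###
  have part_ia : ∀ u y : H, ρ (πc (s u, 0)) y = πc (s (u * y), 0) := by
    intro u y
    rw [hρ (s u, 0) y (hDsu u)]
    have hred : (((s u, (0:C)).1 * s y, (s u, (0:C)).2 * s y) : C × C)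
        = (s u * s y, (0:C)) := by simp
    rw [hred]
    refine hmod _ _ (hDsu (u * y)) ⟨(Qmap s q u y, 0), ?_⟩
    have hD : Dcone d s c m (Qmap s q u y, 0) = (s u * s y - s (u * y), 0) := by
      simp [Dcone, hdQ]
    rw [hD, Prod.mk_add_mk, add_zero]
    congr 1
    abel
  have part_ib : ∀ u : H, πc (s u, 0) = 0 ↔ ∃ v : H, u = c * v := by
    intro u
    constructor
    · intro h
      obtain ⟨⟨a, b⟩, hab⟩ := (hπcker _ (hDsu u)).1 h
      rw [Dcone, Prod.ext_iff] at hab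
      obtain ⟨h1, h2⟩ := hab
      simp only at h1 h2
      have hdb : d b = 0 := by
        have := congrArg (fun x => ((-1 : ℤ) ^ (m + 1)) • x) h2
        simpa [hsq (m + 1)] using this
      obtain ⟨w, hw⟩ := hsplit b hdb
      refine ⟨π b, ?_⟩
      have hscb : s c * b = s c * s (π b) + s c * d w := by
        conv_lhs => rw [hw]
        rw [mul_add]
      have hkey : s u = s (c * π b) +
          d (a + ((-1 : ℤ) ^ m) • (s c * w) + Qmap s q c (π b)) := by
        rw [map_add, map_add, map_zsmul, hscd, hsq m, hdQ, ← h1, hscb]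
        abel
      set W : C := a + ((-1 : ℤ) ^ m) • (s c * w) + Qmap s q c (π b) with hW
      have hthis : π (s u) = π (s (c * π b)) + π (d W) := by
        rw [hkey]
        exact hπadd _ _ (hs0 _) (hd2 W)
      rw [hsπ, hsπ] at hthis
      rw [hthis, (hπker (d W) (hd2 W)).2 ⟨W, rfl⟩, add_zero]
    · rintro ⟨v, rfl⟩
      refine (hπcker _ (hDsu _)).2 ⟨(-(Qmap s q c v), s v), ?_⟩
      have hD : Dcone d s c m (-(Qmap s q c v), s v)
          = (-(s c * s v - s (c * v)) + s c * s v, 0) := by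
        simp only [Dcone, map_neg, hdQ, hs0, smul_zero]
      rw [hD]
      congr 1
      abel
  have part_ic : ∀ w : Hc, ψ w = 0 ↔ ∃ u : H, w = πc (s u, 0) := by
    intro w
    obtain ⟨p, hp, rfl⟩ := hπcsurj w
    obtain ⟨h1, h2⟩ := hD0 p hp
    constructor
    · intro h0
      rw [hψ p hp] at h0
      obtain ⟨w2, hw2⟩ := (hπker _ h2).1 h0
      have hD1 : Dcone d s c m (0, ((-1 : ℤ) ^ (m + 1)) • w2)
          = (s c * ((-1 : ℤ) ^ (m + 1)) • w2, p.2) := by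
        simp only [Dcone, map_zero, zero_add, map_zsmul, hsq (m + 1), hw2]
      have hpr : p = (p.1 - s c * ((-1 : ℤ) ^ (m + 1)) • w2, 0)
          + Dcone d s c m (0, ((-1 : ℤ) ^ (m + 1)) • w2) := by
        rw [hD1, Prod.mk_add_mk, sub_add_cancel, zero_add]
      have hDr : Dcone d s c m (p.1 - s c * ((-1 : ℤ) ^ (m + 1)) • w2, 0) = 0 := by
        have h4 := hDadd (p.1 - s c * ((-1 : ℤ) ^ (m + 1)) • w2, 0)
          (Dcone d s c m (0, ((-1 : ℤ) ^ (m + 1)) • w2))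
        rw [← hpr, hDD, add_zero] at h4
        rw [← h4, hp]
      have hdr1 : d (p.1 - s c * ((-1 : ℤ) ^ (m + 1)) • w2) = 0 := by
        have h5 := (hD0 _ hDr).1
        simpa using h5
      obtain ⟨w', hw'⟩ := hsplit _ hdr1
      refine ⟨π (p.1 - s c * ((-1 : ℤ) ^ (m + 1)) • w2), ?_⟩
      refine hmod _ _ (hDsu _) ⟨(w', 0) + (0, ((-1 : ℤ) ^ (m + 1)) • w2), ?_⟩
      conv_lhs => rw [hpr]
      rw [hDadd]
      have h3 : (p.1 - s c * ((-1 : ℤ) ^ (m + 1)) • w2, (0 : C))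
          = (s (π (p.1 - s c * ((-1 : ℤ) ^ (m + 1)) • w2)), 0)
            + Dcone d s c m (w', 0) := by
        have h6 : Dcone d s c m (w', (0 : C)) = (d w', 0) := by simp [Dcone]
        rw [h6, Prod.mk_add_mk, add_zero, ← hw']
      rw [h3]
      abel
    · rintro ⟨u, hu⟩
      rw [hu, hψ _ (hDsu u)]
      exact hπzero
  have part_id : ∀ x : H, (∃ w : Hc, ψ w = x) ↔ c * x = 0 := by
    intro x
    constructor
    · rintro ⟨w, hw⟩
      obtain ⟨p, hp, rfl⟩ := hπcsurj w
      obtain ⟨h1, h2⟩ := hD0 p hp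
      rw [hψ p hp] at hw
      have hcoc : d (s c * p.2) = 0 := by
        rw [dmul_right _ _ h2, hs0, zero_mul]
      have him : π (s c * p.2) = 0 := by
        refine (hπker _ hcoc).2 ⟨-p.1, ?_⟩
        rw [map_neg, add_eq_zero_iff_eq_neg.mp h1, neg_neg]
      rw [← hw, ← hsπ c, ← hπmul _ _ (hs0 c) h2, him]
    · intro hx
      refine ⟨πc (-(Qmap s q c x), s x), ?_⟩
      rw [hψ _ (hP x hx)]
      exact hsπ x
  have part_ie : ∀ (w : Hc) (y : H), ψ (ρ w y) = ψ w * y := by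
    intro w y
    obtain ⟨p, hp, rfl⟩ := hπcsurj w
    obtain ⟨h1, h2⟩ := hD0 p hp
    rw [hρ p y hp, hψ p hp, hψ _ (hDmul p y hp)]
    rw [hπmul _ _ h2 (hs0 y), hsπ]
  -- ### Theta is a cocycle ###
  have hdTheta : ∀ (i : ℕ) (x y z : H), x ∈ ℋ i → d (Theta s q i x y z) = 0 := by
    intro i x y z hxi
    have hsx : s x ∈ 𝒜 i := hsdeg i x hxi
    unfold Theta
    rw [map_sub, map_add, map_sub, map_zsmul]
    rw [hleib i (s x) hsx (Qmap s q y z), hs0, zero_mul, zero_add, hsq i]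
    rw [dmul_right _ _ (hs0 z), hdQ, hdQ, hdQ, hdQ, ← mul_assoc x y z]
    noncomm_ring
  -- ### part (ii) ###
  have part_ii : ∀ (i j l : ℕ) (x y z : H), x ∈ ℋ i → y ∈ ℋ j → z ∈ ℋ l →
      c * x = 0 →
      ∃ u : H, π (Theta s q m c x (y * z)) - π (Theta s q m c (x * y) z)
          - π (Theta s q m c x y) * z = c * u := by
    intro i j l x y z hxi hyj hzl hcx
    have hT1 : d (Theta s q m c x (y * z)) = 0 := hdTheta m c x (y * z) hc
    have hT2 : d (Theta s q m c (x * y) z) = 0 := hdTheta m c (x * y) z hc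
    have hT3 : d (Theta s q m c x y) = 0 := hdTheta m c x y hc
    have hT3z : d (Theta s q m c x y * s z) = 0 := by
      rw [dmul_right _ _ (hs0 z), hT3, zero_mul]
    have hTi : d (Theta s q i x y z) = 0 := hdTheta i x y z hxi
    have hscT : d (s c * Theta s q i x y z) = 0 := by
      rw [dmul_right _ _ hTi, hs0, zero_mul]
    have hz1 : Qmap s q (c * x) (y * z) = 0 := by rw [hcx, hQ0l]
    have hz2 : Qmap s q (c * (x * y)) z = 0 := by
      rw [← mul_assoc, hcx, zero_mul, hQ0l]
    have hz3 : Qmap s q (c * x) y = 0 := by rw [hcx, hQ0l]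
    have hLHS : π (Theta s q m c x (y * z)) - π (Theta s q m c (x * y) z)
        - π (Theta s q m c x y) * z
        = π (Theta s q m c x (y * z) - Theta s q m c (x * y) z
            - Theta s q m c x y * s z) := by
      rw [hπsub _ _ (by rw [map_sub, hT1, hT2, sub_self]) hT3z,
        hπsub _ _ hT1 hT2, hπmul _ _ hT3 (hs0 z), hsπ]
    obtain ⟨W, hW⟩ : ∃ W : C, Theta s q m c x (y * z) - Theta s q m c (x * y) z
        - Theta s q m c x y * s z
        = ((-1 : ℤ) ^ m) • (s c * Theta s q i x y z) + d W := by
      by_cases hn0 : m + i = 0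
      · have hm0 : m = 0 := by omega
        have hi0 : i = 0 := by omega
        have hscsx : s c * s x = 0 := by
          refine him0 _ ?_ ?_
          · have hmem := SetLike.mul_mem_graded hsc (hsdeg i x hxi)
            rw [hn0] at hmem
            exact hmem
          · obtain ⟨w, hw⟩ := hQex c x
            rw [hcx, map_zero, sub_zero] at hw
            exact ⟨w, hw⟩
        have hQa0 : Qmap s q c x = 0 := by
          unfold Qmap
          rw [hcx, map_zero, sub_zero, hscsx, hq0]
        have hscsx' : ∀ t : C, s c * (s x * t) = 0 := by
          intro t
          rw [← mul_assoc, hscsx, zero_mul]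
        refine ⟨0, ?_⟩
        rw [map_zero, add_zero]
        unfold Theta
        rw [hz1, hz2, hz3, hQa0, ← mul_assoc x y z, hm0, hi0]
        simp only [pow_zero, one_smul, mul_sub, mul_add, hscsx']
        noncomm_ring
      · obtain ⟨n', hn'⟩ : ∃ n', m + i = n' + 1 := ⟨m + i - 1, by omega⟩
        have hQadeg : Qmap s q c x ∈ 𝒜 n' := by
          refine hqdeg n' _ (hQex c x) ?_
          rw [← hn']
          exact sub_mem (SetLike.mul_mem_graded hsc (hsdeg i x hxi))
            (hsdeg _ _ (SetLike.mul_mem_graded hc hxi))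
        have hdQQ : d (Qmap s q c x * Qmap s q y z)
            = (s c * s x) * Qmap s q y z
              + ((-1 : ℤ) ^ n') • (Qmap s q c x * (s y * s z - s (y * z))) := by
          rw [hleib n' _ hQadeg, hdQ, hdQ, hcx, map_zero, sub_zero]
        refine ⟨(-((-1 : ℤ) ^ (m + i))) • (Qmap s q c x * Qmap s q y z), ?_⟩
        rw [map_zsmul, hdQQ]
        have hpn : ((-1 : ℤ)) ^ n' = (-1 : ℤ) ^ (m + i) * (-1) := by
          rw [hn', pow_succ]
          ring
        rw [hpn, pow_add]
        unfold Theta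
        rw [hz1, hz2, hz3, ← mul_assoc x y z]
        rcases Nat.even_or_odd m with hm | hm <;>
          rcases Nat.even_or_odd i with hi | hi <;>
            rw [hm.neg_one_pow, hi.neg_one_pow] <;>
              noncomm_ring
    refine ⟨((-1 : ℤ) ^ m) • π (Theta s q i x y z), ?_⟩
    rw [hLHS, hW, hπadd _ _ (by rw [map_zsmul, hscT, smul_zero]) (hd2 W),
      (hπker _ (hd2 W)).2 ⟨W, rfl⟩, add_zero, hπz m _ hscT,
      hπmul _ _ (hs0 c) hTi, hsπ, mul_smul_comm]
  -- ### part (iii) ###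
  have hodd1 : ((-1 : ℤ) ^ m) * ((-1 : ℤ) ^ (m + 1)) = -1 := by
    rw [← pow_add]
    exact Odd.neg_one_pow ⟨m, by omega⟩
  have hodd2 : ((-1 : ℤ) ^ (m + 1)) * ((-1 : ℤ) ^ m) = -1 := by
    rw [← pow_add]
    exact Odd.neg_one_pow ⟨m, by omega⟩
  have hDneg : ∀ p : C × C, Dcone d s c m p = 0 → Dcone d s c m (-p) = 0 := by
    intro p hp
    have h := hDadd p (-p)
    rw [add_neg_cancel, hDzero] at h
    have h2 := neg_eq_of_add_eq_zero_right h.symm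
    rw [hp, neg_zero] at h2
    exact h2.symm
  have hann : ∀ p : C × C, Dcone d s c m p = 0 → c * π p.2 = 0 := by
    intro p hp
    obtain ⟨h1, h2⟩ := hD0 p hp
    have hcoc : d (s c * p.2) = 0 := by rw [dmul_right _ _ h2, hs0, zero_mul]
    have him : π (s c * p.2) = 0 := by
      refine (hπker _ hcoc).2 ⟨-p.1, ?_⟩
      rw [map_neg, add_eq_zero_iff_eq_neg.mp h1, neg_neg]
    rw [← hsπ c, ← hπmul _ _ (hs0 c) h2, him]
  have part_iiia : ∀ w : Hc, ∃ u x : H, c * x = 0 ∧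
      w = πc (s u, 0) + πc (-(Qmap s q c x), s x) := by
    intro w
    obtain ⟨p, hp, rfl⟩ := hπcsurj w
    obtain ⟨h1, h2⟩ := hD0 p hp
    have hcx0 : c * π p.2 = 0 := hann p hp
    obtain ⟨w2, hw2⟩ := hsplit p.2 h2
    have hdr1 : d (p.1 + Qmap s q c (π p.2) - s c * (((-1 : ℤ) ^ (m + 1)) • w2)) = 0 := by
      rw [map_sub, map_add, hdQ, hcx0, map_zero, sub_zero, hscd, map_zsmul,
        mul_smul_comm, smul_smul, hodd1, neg_one_zsmul]
      have hdp1 : d p.1 = -(s c * p.2) := add_eq_zero_iff_eq_neg.mp h1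
      have hscp2 : s c * p.2 = s c * s (π p.2) + s c * d w2 := by
        conv_lhs => rw [hw2, mul_add]
      rw [hdp1, hscp2]
      abel
    obtain ⟨w', hw'⟩ := hsplit _ hdr1
    refine ⟨π (p.1 + Qmap s q c (π p.2) - s c * (((-1 : ℤ) ^ (m + 1)) • w2)),
      π p.2, hcx0, ?_⟩
    have hfin : p = ((s (π (p.1 + Qmap s q c (π p.2)
          - s c * (((-1 : ℤ) ^ (m + 1)) • w2))), 0)
        + (-(Qmap s q c (π p.2)), s (π p.2)))
        + Dcone d s c m (w', ((-1 : ℤ) ^ (m + 1)) • w2) := by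
      have hDw : Dcone d s c m (w', ((-1 : ℤ) ^ (m + 1)) • w2)
          = (d w' + s c * (((-1 : ℤ) ^ (m + 1)) • w2), d w2) := by
        simp only [Dcone, map_zsmul, hsq (m + 1)]
      rw [hDw, Prod.mk_add_mk, Prod.mk_add_mk]
      refine Prod.ext ?_ ?_
      · simp only
        have h5 : s (π (p.1 + Qmap s q c (π p.2)
              - s c * (((-1 : ℤ) ^ (m + 1)) • w2))) + d w'
            = p.1 + Qmap s q c (π p.2) - s c * (((-1 : ℤ) ^ (m + 1)) • w2) :=
          hw'.symm
        calc p.1 = (s (π (p.1 + Qmap s q c (π p.2)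
              - s c * (((-1 : ℤ) ^ (m + 1)) • w2))) + d w')
              - Qmap s q c (π p.2) + s c * (((-1 : ℤ) ^ (m + 1)) • w2) := by
              rw [h5]; abel
          _ = _ := by abel
      · simp only
        rw [zero_add, ← hw2]
    refine (hmod p _ ?_ ⟨(w', ((-1 : ℤ) ^ (m + 1)) • w2), hfin⟩).trans ?_
    · rw [hDadd, hDsu, hP _ hcx0, add_zero]
    · exact hπcadd _ _ (hDsu _) (hP _ hcx0)
  have part_iiie : ∀ u x : H, c * x = 0 →
      ψ (πc (s u, 0) + πc (-(Qmap s q c x), s x)) = x := by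
    intro u x hx
    rw [hπcP u x hx, hψ _ (hDsum u x hx)]
    exact hsπ x
  have part_iiib : ∀ u u' x x' : H, c * x = 0 → c * x' = 0 →
      πc (s u, 0) + πc (-(Qmap s q c x), s x)
        = πc (s u', 0) + πc (-(Qmap s q c x'), s x') →
      x = x' ∧ ∃ v : H, u - u' = c * v := by
    intro u u' x x' hx hx' heq
    have hxe : x = x' := by
      have e1 := part_iiie u x hx
      rw [heq, part_iiie u' x' hx'] at e1
      exact e1.symm
    subst hxe
    rw [hπcP u x hx, hπcP u' x hx] at heq
    have h0 : πc (s (u - u'), 0) = 0 := by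
      have hdiff : ((s (u - u'), (0 : C)) : C × C)
          = (s u - Qmap s q c x, s x) + -(s u' - Qmap s q c x, s x) := by
        rw [map_sub]
        refine Prod.ext ?_ ?_
        · simp only [Prod.fst_add, Prod.fst_neg]
          abel
        · simp only [Prod.snd_add, Prod.snd_neg]
          abel
      rw [hdiff, hπcadd _ _ (hDsum u x hx) (hDneg _ (hDsum u' x hx)),
        hπcneg _ (hDsum u' x hx), heq, add_neg_cancel]
    obtain ⟨v, hv⟩ := (part_ib (u - u')).1 h0
    exact ⟨rfl, v, hv⟩
  have part_iiic : ∀ u x y : H, c * x = 0 →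
      πc (s (u * y + π (Theta s q m c x y)), 0)
          + πc (-(Qmap s q c (x * y)), s (x * y))
        = ρ (πc (s u, 0) + πc (-(Qmap s q c x), s x)) y := by
    intro u x y hx
    have hxy : c * (x * y) = 0 := by rw [← mul_assoc, hx, zero_mul]
    obtain ⟨t, ht⟩ := hsplit (Theta s q m c x y) (hdTheta m c x y hc)
    have ht' : s (π (Theta s q m c x y)) = Theta s q m c x y - d t := by
      conv_rhs => rw [ht]
      abel
    have hzxy : Qmap s q (c * x) y = 0 := by rw [hx, hQ0l]
    rw [hπcP u x hx, hπcP _ _ hxy, hρ _ y (hDsum u x hx)]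
    refine hmod _ _ (hDmul _ y (hDsum u x hx))
      ⟨(-(Qmap s q u y) - t, ((-1 : ℤ) ^ m) • Qmap s q x y), ?_⟩
    have hD2 : Dcone d s c m (-(Qmap s q u y) - t, ((-1 : ℤ) ^ m) • Qmap s q x y)
        = (-(s u * s y - s (u * y)) - d t + ((-1 : ℤ) ^ m) • (s c * Qmap s q x y),
           -(s x * s y - s (x * y))) := by
      simp only [Dcone, map_sub, map_neg, hdQ, map_zsmul, mul_smul_comm, smul_smul,
        hodd2, neg_one_zsmul]
    rw [hD2, Prod.mk_add_mk]
    refine Prod.ext ?_ ?_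
    · simp only
      rw [map_add, ht', sub_mul]
      unfold Theta
      rw [hzxy]
      abel
    · simp only
      abel
  have part_iiid : ∀ u : H,
      πc (s u, 0) + πc (-(Qmap s q c 0), s 0) = πc (s u, 0) := by
    intro u
    rw [hQ0r c, neg_zero, map_zero]
    rw [show ((0 : C), (0 : C)) = (0 : C × C) from rfl, hπczero, add_zero]
  exact ⟨⟨part_ia, part_ib, part_ic, part_id, part_ie⟩, part_ii,
    part_iiia, part_iiib, part_iiic, part_iiid, part_iiie⟩
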